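/- For all reals x ≥ 0, y ≥ 0, every real κ₁₂ > 0, every real κ₃₁ ≥ 0, and every m ∈ ℕ, the double sequence (n₁, n₂) ↦ x^{n₁} · y^{n₂} / (Γ(1 + κ₁₂·n₂ + n₁) · Γ(1 + κ₃₁·n₁ + m)) is summable over ℕ × ℕ. (This is the convergence of the normalization series of the (γ₁₂, γ₃₁)-deformed vector coherent states.) -/

import Mathlib

open Real Set Filter

set_option maxHeartbeats 1000000 in
/-- Uniform lower bound `Γ(t) ≥ e⁻¹` for `t ≥ 1`. -/
lemma gamma_lb {t : ℝ} (ht : 1 ≤ t) : Real.exp (-1) ≤ Real.Gamma t := by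
  have ht0 : 0 < t := by linarith
  rw [Real.Gamma_eq_integral ht0]
  have hint : MeasureTheory.IntegrableOn (fun x => Real.exp (-x) * x ^ (t - 1)) (Ioi 0) :=
    Real.GammaIntegral_convergent ht0
  have h1 : Real.exp (-1) = ∫ x in Ioi (1:ℝ), Real.exp (-x) := (integral_exp_neg_Ioi 1).symm
  rw [h1]
  have hsub : Ioi (1:ℝ) ⊆ Ioi 0 := Ioi_subset_Ioi (by norm_num)
  have hexpint : MeasureTheory.IntegrableOn (fun x : ℝ => Real.exp (-x)) (Ioi 1) := by
    have := exp_neg_integrableOn_Ioi 1 (one_pos)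
    simpa using this
  have step1 : (∫ x in Ioi (1:ℝ), Real.exp (-x)) ≤
      ∫ x in Ioi (1:ℝ), Real.exp (-x) * x ^ (t - 1) := by
    apply MeasureTheory.setIntegral_mono_on hexpint (hint.mono_set hsub) measurableSet_Ioi
    intro a ha
    have ha1 : (1:ℝ) ≤ a := le_of_lt ha
    nth_rewrite 1 [← mul_one (Real.exp (-a))]
    gcongr
    exact Real.one_le_rpow ha1 (by linarith)
  refine step1.trans ?_
  apply MeasureTheory.setIntegral_mono_set hint ?_ (HasSubset.Subset.eventuallyLE hsub)
  filter_upwards [MeasureTheory.ae_restrict_mem measurableSet_Ioi] with a ha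
  exact mul_nonneg (Real.exp_pos _).le (Real.rpow_nonneg (le_of_lt ha) _)

/-- Slope inequality from log-convexity: `Γ(t) (t-1)^κ ≤ Γ(t+κ)` for `t ≥ 2`. -/
lemma gamma_slope {t κ : ℝ} (ht : 2 ≤ t) (hκ : 0 < κ) :
    Real.Gamma t * (t - 1) ^ κ ≤ Real.Gamma (t + κ) := by
  have h1 : (0:ℝ) < t - 1 := by linarith
  have ht0 : (0:ℝ) < t := by linarith
  have hslope := Real.convexOn_log_Gamma.slope_mono_adjacent
    (show t - 1 ∈ Ioi (0:ℝ) from h1) (show t + κ ∈ Ioi (0:ℝ) by simp; linarith)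
    (show t - 1 < t by linarith) (show t < t + κ by linarith)
  simp only [Function.comp] at hslope
  have hG : Real.Gamma t = (t - 1) * Real.Gamma (t - 1) := by
    have := Real.Gamma_add_one (s := t - 1) (by linarith)
    simpa [sub_add_cancel] using this
  have hGpos : 0 < Real.Gamma (t - 1) := Real.Gamma_pos_of_pos h1
  have hGtpos : 0 < Real.Gamma t := Real.Gamma_pos_of_pos ht0
  have hlog : Real.log (Real.Gamma t) - Real.log (Real.Gamma (t - 1)) = Real.log (t - 1) := by
    rw [hG, Real.log_mul (by positivity) (by positivity)]; ring
  rw [show t - (t - 1) = 1 by ring] at hslope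
  have key : Real.log (t - 1) * κ ≤ Real.log (Real.Gamma (t + κ)) - Real.log (Real.Gamma t) := by
    have h2 : Real.log (t - 1) ≤
        (Real.log (Real.Gamma (t + κ)) - Real.log (Real.Gamma t)) / (t + κ - t) := by
      calc Real.log (t - 1)
          = (Real.log (Real.Gamma t) - Real.log (Real.Gamma (t - 1))) / 1 := by rw [hlog]; ring
        _ ≤ _ := hslope
    rw [show t + κ - t = κ by ring] at h2
    calc Real.log (t - 1) * κ ≤
        ((Real.log (Real.Gamma (t + κ)) - Real.log (Real.Gamma t)) / κ) * κ := by
          apply mul_le_mul_of_nonneg_right h2 hκ.le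
      _ = _ := by field_simp
  have hpos : 0 < Real.Gamma (t + κ) := Real.Gamma_pos_of_pos (by linarith)
  have hexp := Real.exp_le_exp.mpr (by linarith : Real.log (Real.Gamma t) +
      Real.log (t-1) * κ ≤ Real.log (Real.Gamma (t + κ)))
  rw [Real.exp_add, Real.exp_log hGtpos, Real.exp_log hpos] at hexp
  rwa [← Real.rpow_def_of_pos h1] at hexp

/-- Superadditivity: `Γ(1+α) Γ(1+β) ≤ Γ(1+α+β)` for `α, β ≥ 0`. -/
lemma gamma_superadd {α β : ℝ} (hα : 0 ≤ α) (hβ : 0 ≤ β) :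
    Real.Gamma (1 + α) * Real.Gamma (1 + β) ≤ Real.Gamma (1 + α + β) := by
  rcases eq_or_lt_of_le hα with h0 | hα'
  · rw [← h0]; simp [Real.Gamma_one]
  have hGa : 0 < Real.Gamma (1 + α) := Real.Gamma_pos_of_pos (by linarith)
  have hGb : 0 < Real.Gamma (1 + β) := Real.Gamma_pos_of_pos (by linarith)
  have hGab : 0 < Real.Gamma (1 + α + β) := Real.Gamma_pos_of_pos (by linarith)
  set g : ℝ → ℝ := Real.log ∘ Real.Gamma with hg
  have hcv := Real.convexOn_log_Gamma
  -- slope(1, 1+α) ≤ slope(1, (1+β)+α)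
  have s1 : (g (1+α) - g 1) / (1 + α - 1) ≤ (g (1+β+α) - g 1) / (1+β+α - 1) := by
    apply hcv.secant_mono (by simp : (1:ℝ) ∈ Ioi (0:ℝ))
      (by simp; linarith : (1+α:ℝ) ∈ Ioi (0:ℝ)) (by simp; linarith : (1+β+α:ℝ) ∈ Ioi (0:ℝ))
      (by intro h; apply absurd (by linarith : α = 0) (ne_of_gt hα'))
      (by intro h; nlinarith) (by linarith)
  -- slope(1, 1+β+α) ≤ slope(1+β, 1+β+α)  via secant through a = 1+β+α
  have s2 : (g 1 - g (1+β+α)) / (1 - (1+β+α)) ≤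
      (g (1+β) - g (1+β+α)) / (1+β - (1+β+α)) := by
    apply hcv.secant_mono (by simp; linarith : (1+β+α:ℝ) ∈ Ioi (0:ℝ))
      (by simp : (1:ℝ) ∈ Ioi (0:ℝ)) (by simp; linarith : (1+β:ℝ) ∈ Ioi (0:ℝ))
      (by intro h; nlinarith) (by intro h; nlinarith) (by linarith)
  have hg1 : g 1 = 0 := by simp [hg, Real.Gamma_one]
  rw [hg1] at s1 s2
  have e1 : (g (1+α) - 0) / (1 + α - 1) = g (1+α) / α := by ring_nf
  have hβα : (0:ℝ) < β + α := by linarith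
  -- combine: g(1+α)/α ≤ (g(1+β+α)-g(1+β))/α
  have s2' : (g (1+β+α) - 0) / (1+β+α-1) ≤ (g (1+β+α) - g (1+β)) / α := by
    have hd1 : (1:ℝ) - (1+β+α) = -(β+α) := by ring
    have hd2 : (1+β:ℝ) - (1+β+α) = -α := by ring
    rw [hd1, hd2] at s2
    rw [div_neg, div_neg, neg_le_neg_iff] at s2
    calc (g (1+β+α) - 0) / (1+β+α-1) = (g (1+β+α) - 0) / (β+α) := by ring_nf
      _ ≤ (g (1+β+α) - g (1+β)) / α := by
          rw [sub_zero]
          calc g (1+β+α) / (β+α) = (0 - g (1+β+α)) / (β+α) * (-1) := by field_simp; ring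
            _ ≤ (g (1+β) - g (1+β+α)) / α * (-1) := by
                apply mul_le_mul_of_nonpos_right s2 (by norm_num)
            _ = (g (1+β+α) - g (1+β)) / α := by ring
  have final : g (1+α) / α ≤ (g (1+β+α) - g (1+β)) / α := by
    calc g (1+α) / α = (g (1+α) - 0) / (1 + α - 1) := by ring_nf
      _ ≤ (g (1+β+α) - 0) / (1+β+α-1) := s1
      _ ≤ _ := s2'
  have final2 : g (1+α) + g (1+β) ≤ g (1+β+α) := by
    have := div_le_div_iff₀ (by exact hα') (by exact hα') |>.mp final
    nlinarith [mul_le_mul_of_nonneg_right final (le_of_lt hα')]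
  have hexp := Real.exp_le_exp.mpr final2
  rw [hg] at hexp
  simp only [Function.comp] at hexp
  rw [Real.exp_add, Real.exp_log hGa, Real.exp_log hGb, Real.exp_log (by
    convert hGab using 2; ring)] at hexp
  calc Real.Gamma (1+α) * Real.Gamma (1+β) ≤ Real.Gamma (1+β+α) := hexp
    _ = Real.Gamma (1+α+β) := by ring_nf

/-- Ratio-test summability of `yⁿ / Γ(1+κn)`. -/
lemma aux_summable {κ : ℝ} (hκ : 0 < κ) {y : ℝ} (hy : 0 ≤ y) :
    Summable fun n : ℕ => y ^ n / Real.Gamma (1 + κ * n) := by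
  apply summable_of_ratio_norm_eventually_le (r := 1/2) (by norm_num)
  have htend : Tendsto (fun n : ℕ => (κ * n) ^ κ) atTop atTop :=
    (tendsto_rpow_atTop hκ).comp (tendsto_natCast_atTop_atTop.const_mul_atTop hκ)
  have hev1 : ∀ᶠ n : ℕ in atTop, 2*y + 1 ≤ (κ * n) ^ κ := htend.eventually_ge_atTop _
  have hev2 : ∀ᶠ n : ℕ in atTop, (1:ℝ) ≤ κ * n :=
    (tendsto_natCast_atTop_atTop.const_mul_atTop hκ).eventually_ge_atTop _
  filter_upwards [hev1, hev2] with n h1 h2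
  have harg : (0:ℝ) < 1 + κ * n := by positivity
  have hGpos : 0 < Real.Gamma (1 + κ * n) := Real.Gamma_pos_of_pos harg
  have hkey : Real.Gamma (1 + κ * n) * (κ * n) ^ κ ≤ Real.Gamma (1 + κ * (n+1:ℕ)) := by
    have h := gamma_slope (t := 1 + κ * n) (κ := κ) (by linarith) hκ
    rw [show (1 + κ * n - 1 : ℝ) = κ * n by ring] at h
    rw [show (1 + κ * ((n:ℕ)+1:ℕ) : ℝ) = 1 + κ * n + κ by push_cast; ring]
    exact h
  have hD' : Real.Gamma (1 + κ * n) * (2 * y) ≤ Real.Gamma (1 + κ * (n+1:ℕ)) := by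
    calc Real.Gamma (1 + κ * n) * (2 * y) ≤ Real.Gamma (1 + κ * n) * (κ * n) ^ κ := by
          apply mul_le_mul_of_nonneg_left (by linarith) hGpos.le
      _ ≤ _ := hkey
  have hGpos' : 0 < Real.Gamma (1 + κ * (n+1:ℕ)) := by
    apply Real.Gamma_pos_of_pos; push_cast; positivity
  rw [Real.norm_eq_abs, Real.norm_eq_abs, abs_of_nonneg (by positivity),
    abs_of_nonneg (by positivity)]
  rcases eq_or_lt_of_le hy with h0 | hypos
  · rw [pow_succ, ← h0]
    simp
    positivity
  · rw [div_le_iff₀ hGpos', pow_succ]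
    calc y ^ n * y
        = 1/2 * (y ^ n / Real.Gamma (1 + κ * n)) * (Real.Gamma (1 + κ * n) * (2*y)) := by
          field_simp
      _ ≤ 1/2 * (y ^ n / Real.Gamma (1 + κ * n)) * Real.Gamma (1 + κ * (n+1:ℕ)) := by
          apply mul_le_mul_of_nonneg_left hD' (by positivity)

/-- Convergence of the normalization series of the `(γ₁₂, γ₃₁)`-deformed
vector coherent states. -/
theorem norm_series_summable_gamma12_gamma31 (x y κ₁₂ κ₃₁ : ℝ)
    (hx : 0 ≤ x) (hy : 0 ≤ y)
    (h12 : 0 < κ₁₂) (h31 : 0 ≤ κ₃₁) (m : ℕ) :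
    Summable fun p : ℕ × ℕ =>
      x ^ p.1 * y ^ p.2 /
        (Real.Gamma (1 + κ₁₂ * p.2 + p.1) *
          Real.Gamma (1 + κ₃₁ * p.1 + m)) := by
  set A : ℕ → ℝ := fun n => Real.exp 1 * (x ^ n / Real.Gamma (1 + 1 * n)) with hA
  set B : ℕ → ℝ := fun n => y ^ n / Real.Gamma (1 + κ₁₂ * n) with hB
  have hAs : Summable A := ((aux_summable one_pos hx)).mul_left _
  have hBs : Summable B := aux_summable h12 hy
  have hAnn : ∀ n, 0 ≤ A n := fun n => by
    have : 0 < Real.Gamma (1 + 1 * (n:ℝ)) := Real.Gamma_pos_of_pos (by positivity)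
    positivity
  have hBnn : ∀ n, 0 ≤ B n := fun n => by
    have : 0 < Real.Gamma (1 + κ₁₂ * (n:ℝ)) := Real.Gamma_pos_of_pos (by positivity)
    positivity
  have hprod : Summable fun p : ℕ × ℕ => A p.1 * B p.2 :=
    hAs.mul_of_nonneg hBs hAnn hBnn
  apply Summable.of_nonneg_of_le _ _ hprod
  · intro p
    have hg1 : 0 < Real.Gamma (1 + κ₁₂ * p.2 + p.1) :=
      Real.Gamma_pos_of_pos (by positivity)
    have hg2 : 0 < Real.Gamma (1 + κ₃₁ * p.1 + m) :=
      Real.Gamma_pos_of_pos (by positivity)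
    positivity
  · intro p
    obtain ⟨n₁, n₂⟩ := p
    simp only
    have hg1 : 0 < Real.Gamma (1 + κ₁₂ * n₂ + n₁) := Real.Gamma_pos_of_pos (by positivity)
    have hg2 : 0 < Real.Gamma (1 + κ₃₁ * n₁ + m) := Real.Gamma_pos_of_pos (by positivity)
    have hGA : 0 < Real.Gamma (1 + 1 * (n₁:ℝ)) := Real.Gamma_pos_of_pos (by positivity)
    have hGB : 0 < Real.Gamma (1 + κ₁₂ * (n₂:ℝ)) := Real.Gamma_pos_of_pos (by positivity)
    -- lower bounds on the denominator
    have hsplit : Real.Gamma (1 + 1 * (n₁:ℝ)) * Real.Gamma (1 + κ₁₂ * n₂) ≤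
        Real.Gamma (1 + κ₁₂ * n₂ + n₁) := by
      have := gamma_superadd (α := (n₁:ℝ)) (β := κ₁₂ * n₂) (by positivity) (by positivity)
      calc Real.Gamma (1 + 1 * (n₁:ℝ)) * Real.Gamma (1 + κ₁₂ * n₂)
          = Real.Gamma (1 + (n₁:ℝ)) * Real.Gamma (1 + κ₁₂ * n₂) := by norm_num
        _ ≤ Real.Gamma (1 + (n₁:ℝ) + κ₁₂ * n₂) := this
        _ = Real.Gamma (1 + κ₁₂ * n₂ + n₁) := by ring_nf
    have hlb : Real.exp (-1) ≤ Real.Gamma (1 + κ₃₁ * n₁ + m) := gamma_lb (by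
      have h1 : (0:ℝ) ≤ κ₃₁ * n₁ := by positivity
      have h2 : (0:ℝ) ≤ (m:ℝ) := by positivity
      linarith)
    have hmain : x ^ n₁ * y ^ n₂ / (Real.Gamma (1 + κ₁₂ * n₂ + n₁) *
        Real.Gamma (1 + κ₃₁ * n₁ + m)) ≤
        x ^ n₁ * y ^ n₂ / ((Real.Gamma (1 + 1 * (n₁:ℝ)) * Real.Gamma (1 + κ₁₂ * n₂)) *
          Real.exp (-1)) := by
      apply div_le_div_of_nonneg_left (by positivity) (by positivity)
      apply mul_le_mul hsplit hlb (by positivity) hg1.le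
    refine hmain.trans (le_of_eq ?_)
    rw [hA, hB]
    simp only
    rw [Real.exp_neg]
    field_simp
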